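/- Let r_1,…,r_N ≥ 0 with N ≥ 2, and a > 0, ϱ > 0. Define s̄_1 = Σ_{i=1}^N i^a r_i and s̄_2 = Σ_{i=1}^N i^{a+ϱ} r_i. Then Σ_{i=1}^N r_i ≤ ((N^{a+ϱ} − 1)·s̄_1 − (N^a − 1)·s̄_2) / (N^{a+ϱ} − N^a). -/

import Mathlib

open Finset Real

lemma rpow_tangent {x y c : ℝ} (hx : 0 < x) (hy : 0 ≤ y) (hc : 1 ≤ c) :
    x ^ c + c * x ^ (c - 1) * (y - x) ≤ y ^ c := by
  have hs : -1 ≤ y / x - 1 := by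
    have : 0 ≤ y / x := div_nonneg hy hx.le
    linarith
  have h := one_add_mul_self_le_rpow_one_add hs hc
  have hxc : 0 < x ^ c := Real.rpow_pos_of_pos hx c
  have hdiv : (1 + (y / x - 1)) ^ c = y ^ c / x ^ c := by
    rw [add_sub_cancel, Real.div_rpow hy hx.le]
  rw [hdiv] at h
  have h2 : x ^ c * (1 + c * (y / x - 1)) ≤ y ^ c := by
    calc x ^ c * (1 + c * (y / x - 1)) ≤ x ^ c * (y ^ c / x ^ c) :=
          mul_le_mul_of_nonneg_left h hxc.le
      _ = y ^ c := by field_simp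
  have hx1 : x ^ (c - 1) * x = x ^ c := by
    rw [← Real.rpow_add_one hx.ne' (c - 1), sub_add_cancel]
  have hxy : x ^ c * (y / x) = x ^ (c - 1) * y := by
    rw [← hx1]; field_simp
  nlinarith [h2, hx1, hxy]

lemma key_ineq {u v c : ℝ} (hu : 1 ≤ u) (huv : u ≤ v) (hc : 1 ≤ c) :
    (u ^ c - 1) * (v - 1) ≤ (v ^ c - 1) * (u - 1) := by
  have hu0 : 0 < u := lt_of_lt_of_le one_pos hu
  have B1 : u ^ c - 1 ≤ c * u ^ (c - 1) * (u - 1) := by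
    have := rpow_tangent hu0 zero_le_one hc
    rw [Real.one_rpow] at this
    nlinarith [this]
  have B2 : c * u ^ (c - 1) * (v - u) ≤ v ^ c - u ^ c := by
    have := rpow_tangent hu0 (by linarith : (0:ℝ) ≤ v) hc
    linarith
  nlinarith [mul_le_mul_of_nonneg_left B2 (by linarith : (0:ℝ) ≤ u - 1),
    mul_le_mul_of_nonneg_right B1 (by linarith : (0:ℝ) ≤ v - u)]

theorem frolov_thm3 (N : ℕ) (hN : 2 ≤ N) (r : ℕ → ℝ) (a ϱ : ℝ)
    (hr : ∀ i ∈ Finset.Icc 1 N, 0 ≤ r i)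
    (ha : 0 < a) (hϱ : 0 < ϱ) :
    ∑ i ∈ Finset.Icc 1 N, r i
      ≤ (((N : ℝ) ^ (a + ϱ) - 1) * (∑ i ∈ Finset.Icc 1 N, (i : ℝ) ^ a * r i)
          - ((N : ℝ) ^ a - 1) * ∑ i ∈ Finset.Icc 1 N, (i : ℝ) ^ (a + ϱ) * r i)
        / ((N : ℝ) ^ (a + ϱ) - (N : ℝ) ^ a) := by
  set b := a + ϱ with hb
  have hN1 : (1:ℝ) < (N:ℝ) := by
    exact_mod_cast lt_of_lt_of_le one_lt_two (by exact_mod_cast hN : (2:ℝ) ≤ (N:ℝ))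
  have hD : 0 < (N:ℝ) ^ b - (N:ℝ) ^ a := by
    have : (N:ℝ) ^ a < (N:ℝ) ^ b := by
      rw [Real.rpow_lt_rpow_left_iff hN1]; simp [hb]; linarith
    linarith
  rw [le_div_iff₀ hD]
  have hterm : ∀ i ∈ Finset.Icc 1 N,
      r i * ((N:ℝ) ^ b - (N:ℝ) ^ a)
        ≤ ((N:ℝ) ^ b - 1) * ((i:ℝ) ^ a * r i) - ((N:ℝ) ^ a - 1) * ((i:ℝ) ^ b * r i) := by
    intro i hi
    obtain ⟨hi1, hiN⟩ := Finset.mem_Icc.mp hi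
    have hi1' : (1:ℝ) ≤ (i:ℝ) := by exact_mod_cast hi1
    have hiN' : (i:ℝ) ≤ (N:ℝ) := by exact_mod_cast hiN
    have hu : (1:ℝ) ≤ (i:ℝ) ^ a := Real.one_le_rpow hi1' ha.le
    have huv : (i:ℝ) ^ a ≤ (N:ℝ) ^ a := Real.rpow_le_rpow (by linarith) hiN' ha.le
    have hc : (1:ℝ) ≤ b / a := by rw [le_div_iff₀ ha]; simp [hb]; linarith
    have hab : a * (b / a) = b := by field_simp
    have e1 : ((i:ℝ) ^ a) ^ (b/a) = (i:ℝ) ^ b := by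
      rw [← Real.rpow_mul (by positivity), hab]
    have e2 : ((N:ℝ) ^ a) ^ (b/a) = (N:ℝ) ^ b := by
      rw [← Real.rpow_mul (by positivity), hab]
    have hk := key_ineq hu huv hc
    rw [e1, e2] at hk
    have hri := hr i hi
    nlinarith [mul_le_mul_of_nonneg_right hk hri]
  calc (∑ i ∈ Finset.Icc 1 N, r i) * ((N:ℝ) ^ b - (N:ℝ) ^ a)
      = ∑ i ∈ Finset.Icc 1 N, r i * ((N:ℝ) ^ b - (N:ℝ) ^ a) := Finset.sum_mul ..
    _ ≤ ∑ i ∈ Finset.Icc 1 N,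
          (((N:ℝ) ^ b - 1) * ((i:ℝ) ^ a * r i) - ((N:ℝ) ^ a - 1) * ((i:ℝ) ^ b * r i)) :=
        Finset.sum_le_sum hterm
    _ = ((N:ℝ) ^ b - 1) * (∑ i ∈ Finset.Icc 1 N, (i:ℝ) ^ a * r i)
          - ((N:ℝ) ^ a - 1) * ∑ i ∈ Finset.Icc 1 N, (i:ℝ) ^ b * r i := by
        rw [Finset.sum_sub_distrib, ← Finset.mul_sum, ← Finset.mul_sum]
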